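/- Let σ be an n-qubit state, let C be the Haar-random MPS circuit on n qubits with subcircuit width k and T = n − k + 1 layers, and let Z_i denote the Pauli Z = diag(1, −1) acting on the i-th qubit and identity elsewhere. Then for all qubits i ≠ j in {1, …, n}, E[ tr(Z_i · C σ C†) · tr(Z_j · C σ C†) ] = 0, where E is over the independent Haar-random subcircuits. -/

import Mathlib

/-!
Common definitions: Haar measure on the unitary group, the MPS ansatz circuit,
tensor-product embeddings of local operators, and the quantities `h₁`, `h₂`.
-/

noncomputable section

namespace MPS

open MeasureTheory Matrix
open scoped ComplexOrder

/-- The unitary group `U(d)` as matrices over `ℂ`. -/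
abbrev UG (d : ℕ) : Submonoid (Matrix (Fin d) (Fin d) ℂ) := Matrix.unitaryGroup (Fin d) ℂ

instance matrixMeasurableSpace (m n : ℕ) : MeasurableSpace (Matrix (Fin m) (Fin n) ℂ) :=
  borel _

instance matrixBorelSpace (m n : ℕ) : BorelSpace (Matrix (Fin m) (Fin n) ℂ) := ⟨rfl⟩

instance UGCompact (d : ℕ) : CompactSpace (UG d) := by
  have h1 : IsClosed {A : Matrix (Fin d) (Fin d) ℂ | star A * A = 1} :=
    isClosed_eq (continuous_star.matrix_mul continuous_id) continuous_const
  have h2 : IsClosed {A : Matrix (Fin d) (Fin d) ℂ | A * star A = 1} :=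
    isClosed_eq (continuous_id.matrix_mul continuous_star) continuous_const
  have heq : (UG d : Set (Matrix (Fin d) (Fin d) ℂ)) =
      {A | star A * A = 1} ∩ {A | A * star A = 1} := by
    ext A
    simpa using Unitary.mem_iff
  have hclosed : IsClosed ((UG d : Set (Matrix (Fin d) (Fin d) ℂ))) := by
    rw [heq]; exact h1.inter h2
  have hsub : (UG d : Set (Matrix (Fin d) (Fin d) ℂ)) ⊆
      (Set.univ.pi fun _ : Fin d => Set.univ.pi fun _ : Fin d => Metric.closedBall (0 : ℂ) 1) := by
    intro A hA i _ j _
    simpa using entry_norm_bound_of_unitary hA i j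
  have hcpt : IsCompact ((UG d : Set (Matrix (Fin d) (Fin d) ℂ))) :=
    IsCompact.of_isClosed_subset
      (isCompact_univ_pi fun _ => isCompact_univ_pi fun _ => isCompact_closedBall 0 1)
      hclosed hsub
  exact isCompact_iff_compactSpace.mp hcpt

instance UGBorel (d : ℕ) : BorelSpace (UG d) :=
  Subtype.borelSpace _

instance UGTopGroup (d : ℕ) : IsTopologicalGroup (UG d) where
  continuous_mul := continuous_mul
  continuous_inv := by
    exact Continuous.subtype_mk (continuous_star.comp continuous_subtype_val) _

/-- The Haar probability measure on the unitary group `U(d)`. -/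
def haarUG (d : ℕ) : Measure (UG d) := Measure.haarMeasure ⊤

instance haarUGProb (d : ℕ) : IsProbabilityMeasure (haarUG d) := by
  constructor
  have := Measure.haarMeasure_self (G := UG d) (K₀ := ⊤)
  rw [TopologicalSpace.PositiveCompacts.coe_top] at this
  exact this

/-- The distribution of `T` independent Haar-random elements of `U(d)`. -/
def haarTuple (T d : ℕ) : Measure (Fin T → UG d) := Measure.pi fun _ => haarUG d

instance haarTupleProb (T d : ℕ) : IsProbabilityMeasure (haarTuple T d) :=
  Measure.pi.instIsProbabilityMeasure (fun _ : Fin T => haarUG d)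

/-- The `t`-th binary digit of `x` (from the least significant). -/
def bitAt (t x : ℕ) : ℕ := x / 2 ^ t % 2

/-- `bitAt` as an element of `Fin 2`. -/
def bitFin (t : ℕ) (x : ℕ) : Fin 2 := ⟨bitAt t x, Nat.mod_lt _ (by norm_num)⟩

/-- `I_{2^(n-k-b)} ⊗ U ⊗ I_{2^b}` for a `2^k × 2^k` matrix `U`, as a `2^n × 2^n` matrix,
with big-endian ordering of the qubits (qubit 1 = most significant bit). -/
def embed (n k b : ℕ) (U : Matrix (Fin (2 ^ k)) (Fin (2 ^ k)) ℂ) :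
    Matrix (Fin (2 ^ n)) (Fin (2 ^ n)) ℂ :=
  Matrix.of fun x y =>
    if (x : ℕ) / 2 ^ (k + b) = (y : ℕ) / 2 ^ (k + b) ∧ (x : ℕ) % 2 ^ b = (y : ℕ) % 2 ^ b then
      U ⟨(x : ℕ) / 2 ^ b % 2 ^ k, Nat.mod_lt _ (Nat.two_pow_pos k)⟩
        ⟨(y : ℕ) / 2 ^ b % 2 ^ k, Nat.mod_lt _ (Nat.two_pow_pos k)⟩
    else 0

/-- The MPS ansatz circuit `C = ∏_{p=1}^{T} (I_{2^{n-k-p+1}} ⊗ U_p ⊗ I_{2^{p-1}})`, the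
product taken with the `p = 1` factor leftmost. -/
def mpsCircuit (n k : ℕ) {T : ℕ} (U : Fin T → Matrix (Fin (2 ^ k)) (Fin (2 ^ k)) ℂ) :
    Matrix (Fin (2 ^ n)) (Fin (2 ^ n)) ℂ :=
  ((List.finRange T).map fun p => embed n k p.1 (U p)).prod

/-- The MPS circuit built from unitaries. -/
def circuitOf (n k : ℕ) {T : ℕ} (U : Fin T → UG (2 ^ k)) :
    Matrix (Fin (2 ^ n)) (Fin (2 ^ n)) ℂ :=
  mpsCircuit n k fun p => (U p : Matrix (Fin (2 ^ k)) (Fin (2 ^ k)) ℂ)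

/-- The global observable `(|0⟩⟨0|)^{⊗ n} = |0…0⟩⟨0…0|`. -/
def proj00 (n : ℕ) : Matrix (Fin (2 ^ n)) (Fin (2 ^ n)) ℂ :=
  Matrix.single 0 0 1

/-- The Pauli `Z` on qubit `i` (1-indexed, qubit 1 = most significant bit) of `n` qubits,
tensored with the identity elsewhere. -/
def pauliZ (n i : ℕ) : Matrix (Fin (2 ^ n)) (Fin (2 ^ n)) ℂ :=
  Matrix.diagonal fun x => if bitAt (n - i) (x : ℕ) = 0 then 1 else -1

/-- The projector `|0⟩⟨0|_i` on qubit `i` (1-indexed) of `n` qubits, tensored with the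
identity elsewhere. -/
def proj0At (n i : ℕ) : Matrix (Fin (2 ^ n)) (Fin (2 ^ n)) ℂ :=
  Matrix.diagonal fun x => if bitAt (n - i) (x : ℕ) = 0 then 1 else 0

/-- `M 1 ⊗ M 2 ⊗ ⋯ ⊗ M n` of single-qubit matrices, as a `2^n × 2^n` matrix. -/
def tensorProd (n : ℕ) (M : Fin n → Matrix (Fin 2) (Fin 2) ℂ) :
    Matrix (Fin (2 ^ n)) (Fin (2 ^ n)) ℂ :=
  Matrix.of fun x y =>
    ∏ i : Fin n, M i (bitFin (n - 1 - (i : ℕ)) (x : ℕ)) (bitFin (n - 1 - (i : ℕ)) (y : ℕ))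

/-- The entrywise 1-norm `‖A‖₁ = Σ_{ij} |A_{ij}|`. -/
def entryOneNorm {d : ℕ} (A : Matrix (Fin d) (Fin d) ℂ) : ℝ :=
  ∑ i, ∑ j, ‖A i j‖

/-- `h₁(σ) = min over single-qubit unitaries V₁, …, V_n of ‖(V₁⊗⋯⊗V_n) σ (V₁⊗⋯⊗V_n)†‖₁²`. -/
def h1 (n : ℕ) (σ : Matrix (Fin (2 ^ n)) (Fin (2 ^ n)) ℂ) : ℝ :=
  ⨅ V : Fin n → UG 2,
    entryOneNorm (tensorProd n (fun i => (V i : Matrix (Fin 2) (Fin 2) ℂ)) * σ *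
      (tensorProd n fun i => (V i : Matrix (Fin 2) (Fin 2) ℂ))ᴴ) ^ 2

/-- The square root of a positive semidefinite matrix, with the definition `PosSemidef.sqrt`
had in the older Mathlib (it has since been removed). -/
def psdSqrt {d : ℕ} {A : Matrix (Fin d) (Fin d) ℂ} (hA : A.PosSemidef) :
    Matrix (Fin d) (Fin d) ℂ :=
  hA.1.eigenvectorUnitary.1 * diagonal ((↑) ∘ (Real.sqrt ∘ hA.1.eigenvalues)) *
    (star hA.1.eigenvectorUnitary : Matrix (Fin d) (Fin d) ℂ)

/-- The trace norm `‖A‖_tr = tr √(A† A)`. -/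
def traceNorm {d : ℕ} (A : Matrix (Fin d) (Fin d) ℂ) : ℝ :=
  (psdSqrt (Matrix.posSemidef_conjTranspose_mul_self A)).trace.re

/-- `h₂(σ) = min over single-qubit states ρ₁, …, ρ_n of ‖ρ₁⊗⋯⊗ρ_n − σ‖_tr`. -/
def h2 (n : ℕ) (σ : Matrix (Fin (2 ^ n)) (Fin (2 ^ n)) ℂ) : ℝ :=
  ⨅ ρ : Fin n → {ρ : Matrix (Fin 2) (Fin 2) ℂ // ρ.PosSemidef ∧ ρ.trace = 1},
    traceNorm (tensorProd n (fun i => (ρ i : Matrix (Fin 2) (Fin 2) ℂ)) - σ)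

end MPS

namespace MPSAux

open Matrix MeasureTheory MPS

/-! ### Nat bit lemmas -/

lemma nat_div_xor {t b : ℕ} (h : b ≤ t) (x : ℕ) :
    (x ^^^ 2 ^ t) / 2 ^ b = x / 2 ^ b ^^^ 2 ^ (t - b) := by
  apply Nat.eq_of_testBit_eq
  intro i
  simp only [← Nat.shiftRight_eq_div_pow, Nat.testBit_shiftRight, Nat.testBit_xor,
    Nat.testBit_two_pow]
  congr 1
  exact decide_eq_decide.mpr (by omega)

lemma nat_div_xor_high {t b : ℕ} (h : t < b) (x : ℕ) :
    (x ^^^ 2 ^ t) / 2 ^ b = x / 2 ^ b := by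
  apply Nat.eq_of_testBit_eq
  intro i
  simp only [← Nat.shiftRight_eq_div_pow, Nat.testBit_shiftRight, Nat.testBit_xor,
    Nat.testBit_two_pow]
  have : (t = b + i) = False := by simp; omega
  simp [this]

lemma nat_mod_xor_high {t b : ℕ} (h : b ≤ t) (x : ℕ) :
    (x ^^^ 2 ^ t) % 2 ^ b = x % 2 ^ b := by
  apply Nat.eq_of_testBit_eq
  intro i
  simp only [Nat.testBit_mod_two_pow, Nat.testBit_xor, Nat.testBit_two_pow]
  by_cases hi : i < b
  · have : (t = i) = False := by simp; omega
    simp [hi, this]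
  · simp [hi]

lemma nat_mod_xor_low {s k : ℕ} (h : s < k) (a : ℕ) :
    (a ^^^ 2 ^ s) % 2 ^ k = a % 2 ^ k ^^^ 2 ^ s := by
  apply Nat.eq_of_testBit_eq
  intro i
  simp only [Nat.testBit_mod_two_pow, Nat.testBit_xor, Nat.testBit_two_pow]
  by_cases hi : i < k
  · simp [hi]
  · have : (s = i) = False := by simp; omega
    simp [hi, this]

lemma bitAt_xor_self (t x : ℕ) : bitAt t (x ^^^ 2 ^ t) = 1 - bitAt t x := by
  unfold MPS.bitAt
  rw [nat_div_xor (le_refl t), Nat.sub_self, pow_zero]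
  have h := nat_mod_xor_low (s := 0) (k := 1) (by norm_num) (x / 2 ^ t)
  simp only [pow_zero, pow_one] at h
  rw [h]
  rcases Nat.mod_two_eq_zero_or_one (x / 2 ^ t) with h2 | h2 <;> simp [h2]

lemma bitAt_xor_ne {t t' : ℕ} (h : t' ≠ t) (x : ℕ) :
    bitAt t' (x ^^^ 2 ^ t) = bitAt t' x := by
  unfold MPS.bitAt
  rcases lt_or_ge t t' with h1 | h1
  · rw [nat_div_xor_high h1]
  · have h1' : t' ≤ t := h1
    rw [nat_div_xor h1']
    have : 1 ≤ t - t' := by omega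
    have := nat_mod_xor_high (t := t - t') (b := 1) this (x / 2 ^ t')
    simpa using this

/-! ### The bit-flip matrix -/

lemma two_pow_lt {t n : ℕ} (h : t < n) : 2 ^ t < 2 ^ n :=
  Nat.pow_lt_pow_right (by norm_num) h

def flip (n t : ℕ) (h : t < n) (x : Fin (2 ^ n)) : Fin (2 ^ n) :=
  ⟨(x : ℕ) ^^^ 2 ^ t, Nat.xor_lt_two_pow x.2 (two_pow_lt h)⟩

lemma flip_coe {n t : ℕ} (h : t < n) (x : Fin (2 ^ n)) :
    ((flip n t h x : Fin (2 ^ n)) : ℕ) = (x : ℕ) ^^^ 2 ^ t := rfl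

lemma flip_flip {n t : ℕ} (h : t < n) (x : Fin (2 ^ n)) :
    flip n t h (flip n t h x) = x := by
  apply Fin.ext
  simp [flip, xor_cancel_right]

lemma flip_eq_iff {n t : ℕ} (h : t < n) (x y : Fin (2 ^ n)) :
    (y = flip n t h x) ↔ (x = flip n t h y) := by
  constructor <;> intro hh <;> simp [hh, flip_flip]

def Xg (n t : ℕ) (h : t < n) : Matrix (Fin (2 ^ n)) (Fin (2 ^ n)) ℂ :=
  Matrix.of fun x y => if y = flip n t h x then 1 else 0

lemma Xg_mul_apply {n t : ℕ} (h : t < n) (M : Matrix (Fin (2 ^ n)) (Fin (2 ^ n)) ℂ)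
    (x y : Fin (2 ^ n)) : (Xg n t h * M) x y = M (flip n t h x) y := by
  rw [Matrix.mul_apply]
  simp [Xg, ite_mul]

lemma mul_Xg_apply {n t : ℕ} (h : t < n) (M : Matrix (Fin (2 ^ n)) (Fin (2 ^ n)) ℂ)
    (x y : Fin (2 ^ n)) : (M * Xg n t h) x y = M x (flip n t h y) := by
  rw [Matrix.mul_apply]
  simp only [Xg, Matrix.of_apply]
  have hiff : ∀ j, (y = flip n t h j) ↔ (j = flip n t h y) := fun j => flip_eq_iff h j y
  simp_rw [hiff]
  simp [mul_ite]

lemma Xg_mul_Xg {n t : ℕ} (h : t < n) : Xg n t h * Xg n t h = 1 := by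
  ext x y
  rw [Xg_mul_apply]
  simp [Xg, flip_flip, Matrix.one_apply, eq_comm]

lemma Xg_conjTranspose {n t : ℕ} (h : t < n) : (Xg n t h)ᴴ = Xg n t h := by
  ext x y
  simp only [Matrix.conjTranspose_apply, Xg, Matrix.of_apply]
  by_cases hxy : x = flip n t h y
  · rw [if_pos hxy, if_pos ((flip_eq_iff h y x).mp hxy)]; simp
  · rw [if_neg hxy, if_neg (fun hc => hxy ((flip_eq_iff h y x).mpr hc))]; simp

end MPSAux
namespace MPSAux

open Matrix MPS

lemma xor_eq_iff_nat (a b c : ℕ) : (a ^^^ c = b) ↔ (a = b ^^^ c) := by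
  constructor <;> rintro rfl <;> rw [xor_cancel_right]

/-! ### embed interaction with Xg -/

lemma embed_flip_mul {n k b s t : ℕ} (hs : s < k) (hst : s + b = t) (htn : t < n)
    (U : Matrix (Fin (2 ^ k)) (Fin (2 ^ k)) ℂ) :
    embed n k b (Xg k s hs * U) = Xg n t htn * embed n k b U := by
  subst hst
  ext x y
  rw [Xg_mul_apply]
  simp only [MPS.embed, Matrix.of_apply]
  rw [Xg_mul_apply]
  have e1 : ((flip n (s + b) htn x : Fin (2 ^ n)) : ℕ) / 2 ^ (k + b) = (x : ℕ) / 2 ^ (k + b) := by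
    rw [flip_coe]; exact nat_div_xor_high (by omega) x
  have e2 : ((flip n (s + b) htn x : Fin (2 ^ n)) : ℕ) % 2 ^ b = (x : ℕ) % 2 ^ b := by
    rw [flip_coe]; exact nat_mod_xor_high (by omega) x
  have e3 : ((flip n (s + b) htn x : Fin (2 ^ n)) : ℕ) / 2 ^ b % 2 ^ k
      = ((x : ℕ) / 2 ^ b % 2 ^ k) ^^^ 2 ^ s := by
    rw [flip_coe, nat_div_xor (by omega : b ≤ s + b), show s + b - b = s by omega,
      nat_mod_xor_low hs]
  rw [e1, e2]
  refine if_congr Iff.rfl ?_ rfl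
  congr 1
  apply Fin.ext
  rw [flip_coe] at e3
  simp only [flip]
  exact e3.symm

lemma embed_comm_Xg {n k b t : ℕ} (hkb : k + b ≤ t) (htn : t < n)
    (U : Matrix (Fin (2 ^ k)) (Fin (2 ^ k)) ℂ) :
    Xg n t htn * embed n k b U = embed n k b U * Xg n t htn := by
  ext x y
  rw [Xg_mul_apply, mul_Xg_apply]
  simp only [MPS.embed, Matrix.of_apply, flip_coe]
  have fx1 : ((x : ℕ) ^^^ 2 ^ t) / 2 ^ (k + b) = (x : ℕ) / 2 ^ (k + b) ^^^ 2 ^ (t - (k + b)) :=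
    nat_div_xor hkb x
  have fy1 : ((y : ℕ) ^^^ 2 ^ t) / 2 ^ (k + b) = (y : ℕ) / 2 ^ (k + b) ^^^ 2 ^ (t - (k + b)) :=
    nat_div_xor hkb y
  have fx2 : ((x : ℕ) ^^^ 2 ^ t) % 2 ^ b = (x : ℕ) % 2 ^ b := nat_mod_xor_high (by omega) x
  have fy2 : ((y : ℕ) ^^^ 2 ^ t) % 2 ^ b = (y : ℕ) % 2 ^ b := nat_mod_xor_high (by omega) y
  have fx3 : ((x : ℕ) ^^^ 2 ^ t) / 2 ^ b % 2 ^ k = (x : ℕ) / 2 ^ b % 2 ^ k := by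
    rw [nat_div_xor (by omega : b ≤ t)]
    exact nat_mod_xor_high (by omega) _
  have fy3 : ((y : ℕ) ^^^ 2 ^ t) / 2 ^ b % 2 ^ k = (y : ℕ) / 2 ^ b % 2 ^ k := by
    rw [nat_div_xor (by omega : b ≤ t)]
    exact nat_mod_xor_high (by omega) _
  simp only [fx1, fx2, fy1, fy2]
  refine if_congr (and_congr (xor_eq_iff_nat _ _ _) Iff.rfl) ?_ rfl
  congr 1 <;> apply Fin.ext
  · exact fx3
  · exact fy3.symm

/-! ### pauliZ interaction with Xg -/

lemma pauliZ_Xg_anticomm {n t : ℕ} (htn : t < n) (i : ℕ) (hti : n - i = t) :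
    pauliZ n i * Xg n t htn = -(Xg n t htn * pauliZ n i) := by
  subst hti
  ext x y
  simp only [MPS.pauliZ, Matrix.neg_apply, Matrix.diagonal_mul, Matrix.mul_diagonal]
  by_cases hxy : y = flip n (n - i) htn x
  · subst hxy
    have hb := bitAt_xor_self (n - i) (x : ℕ)
    have h01 : bitAt (n - i) (x : ℕ) = 0 ∨ bitAt (n - i) (x : ℕ) = 1 := by
      unfold MPS.bitAt; omega
    rcases h01 with h0 | h0 <;> simp [Xg, flip_coe, hb, h0]
  · simp [Xg, hxy]

lemma pauliZ_Xg_comm {n t : ℕ} (htn : t < n) (j : ℕ) (htj : n - j ≠ t) :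
    pauliZ n j * Xg n t htn = Xg n t htn * pauliZ n j := by
  ext x y
  simp only [MPS.pauliZ, Matrix.diagonal_mul, Matrix.mul_diagonal]
  by_cases hxy : y = flip n t htn x
  · subst hxy
    have hb := bitAt_xor_ne htj (x : ℕ)
    simp [Xg, flip_coe, hb]
  · simp [Xg, hxy]

end MPSAux
namespace MPSAux

open Matrix MeasureTheory MPS

/-! ### Pulling a left factor through the circuit product -/

lemma prod_update_left {M : Type*} [Monoid M] :
    ∀ {T : ℕ} (f : Fin T → M) (p₀ : Fin T) (X : M),
      (∀ p, p < p₀ → X * f p = f p * X) →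
      ((List.finRange T).map (Function.update f p₀ (X * f p₀))).prod
        = X * ((List.finRange T).map f).prod := by
  intro T
  induction T with
  | zero => exact fun f p₀ => p₀.elim0
  | succ T ih =>
    intro f p₀ X hc
    rw [List.finRange_succ, List.map_cons, List.map_cons, List.prod_cons, List.prod_cons]
    rcases Fin.eq_zero_or_eq_succ p₀ with h0 | ⟨q, rfl⟩
    · subst h0
      rw [Function.update_self]
      have htail : (List.map Fin.succ (List.finRange T)).map (Function.update f 0 (X * f 0))
          = (List.map Fin.succ (List.finRange T)).map f := by
        apply List.map_congr_left
        intro a ha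
        rcases List.mem_map.mp ha with ⟨b, _, rfl⟩
        exact Function.update_of_ne (Fin.succ_ne_zero b) _ _
      rw [htail, mul_assoc]
    · rw [Function.update_of_ne (Fin.succ_ne_zero q).symm]
      rw [List.map_map, List.map_map]
      have hcomp : (Function.update f q.succ (X * f q.succ)) ∘ Fin.succ
          = Function.update (f ∘ Fin.succ) q (X * (f ∘ Fin.succ) q) :=
        Function.update_comp_eq_of_injective _ (Fin.succ_injective T) _ _
      rw [hcomp, ih (f ∘ Fin.succ) q X (fun p hp => hc p.succ (by simpa using hp))]
      rw [← mul_assoc, ← mul_assoc, hc 0 (Fin.succ_pos q)]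

/-! ### Trace flipping identities -/

lemma trace_conj_neg {d : ℕ} (X Z C S : Matrix (Fin d) (Fin d) ℂ)
    (hXZX : X * Z * X = -Z) (hXH : Xᴴ = X) :
    Matrix.trace (Z * (X * C) * S * (X * C)ᴴ) = -Matrix.trace (Z * C * S * Cᴴ) := by
  rw [Matrix.conjTranspose_mul, hXH]
  have h1 : Z * (X * C) * S * (Cᴴ * X) = (Z * X * (C * S * Cᴴ)) * X := by noncomm_ring
  rw [h1, Matrix.trace_mul_comm]
  have h2 : X * (Z * X * (C * S * Cᴴ)) = (X * Z * X) * (C * S * Cᴴ) := by noncomm_ring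
  rw [h2, hXZX]
  have h3 : -Z * (C * S * Cᴴ) = -(Z * C * S * Cᴴ) := by noncomm_ring
  rw [h3, Matrix.trace_neg]

lemma trace_conj_pos {d : ℕ} (X Z C S : Matrix (Fin d) (Fin d) ℂ)
    (hXZX : X * Z * X = Z) (hXH : Xᴴ = X) :
    Matrix.trace (Z * (X * C) * S * (X * C)ᴴ) = Matrix.trace (Z * C * S * Cᴴ) := by
  rw [Matrix.conjTranspose_mul, hXH]
  have h1 : Z * (X * C) * S * (Cᴴ * X) = (Z * X * (C * S * Cᴴ)) * X := by noncomm_ring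
  rw [h1, Matrix.trace_mul_comm]
  have h2 : X * (Z * X * (C * S * Cᴴ)) = (X * Z * X) * (C * S * Cᴴ) := by noncomm_ring
  rw [h2, hXZX]
  have h3 : Z * (C * S * Cᴴ) = Z * C * S * Cᴴ := by noncomm_ring
  rw [h3]

/-! ### Continuity of the circuit -/

lemma continuous_embed (n k b : ℕ) :
    Continuous fun A : Matrix (Fin (2 ^ k)) (Fin (2 ^ k)) ℂ => embed n k b A := by
  apply continuous_matrix
  intro x y
  simp only [MPS.embed, Matrix.of_apply]
  by_cases hc : (x : ℕ) / 2 ^ (k + b) = (y : ℕ) / 2 ^ (k + b) ∧ (x : ℕ) % 2 ^ b = (y : ℕ) % 2 ^ b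
  · simp only [if_pos hc]
    exact (continuous_apply _).comp (continuous_apply _)
  · simp only [if_neg hc]
    exact continuous_const

lemma continuous_circuitOf (n k T : ℕ) :
    Continuous fun U : Fin T → UG (2 ^ k) => circuitOf n k U := by
  unfold MPS.circuitOf MPS.mpsCircuit
  apply continuous_list_prod
  intro p _
  exact (continuous_embed n k p.1).comp
    (continuous_subtype_val.comp (continuous_apply p))

end MPSAux
open MeasureTheory Matrix
open scoped ComplexOrder

/-- For distinct qubits `i ≠ j`,
`E[tr(Z_i C σ C†) · tr(Z_j C σ C†)] = 0`. -/
theorem mps_cross_moment_Z_eq_zero (n k : ℕ) (hk : 2 ≤ k) (hkn : k ≤ n)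
    (σ : Matrix (Fin (2 ^ n)) (Fin (2 ^ n)) ℂ)
    (hσ : σ.PosSemidef) (hσtr : σ.trace = 1)
    (i j : ℕ) (hi1 : 1 ≤ i) (hin : i ≤ n) (hj1 : 1 ≤ j) (hjn : j ≤ n) (hij : i ≠ j) :
    ∫ U : Fin (n - k + 1) → MPS.UG (2 ^ k),
        (Matrix.trace (MPS.pauliZ n i * MPS.circuitOf n k U * σ * (MPS.circuitOf n k U)ᴴ)).re *
        (Matrix.trace (MPS.pauliZ n j * MPS.circuitOf n k U * σ * (MPS.circuitOf n k U)ᴴ)).re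
      ∂ MPS.haarTuple (n - k + 1) (2 ^ k) = 0 := by
  classical
  open MPSAux in
  -- basic numerology
  have htn : n - i < n := by omega
  have hb₀T : (n - i) + 1 - k < n - k + 1 := by omega
  have hs : (n - i) - ((n - i) + 1 - k) < k := by omega
  have hst : ((n - i) - ((n - i) + 1 - k)) + ((n - i) + 1 - k) = n - i := by omega
  set t : ℕ := n - i with ht
  set b₀ : ℕ := t + 1 - k with hb₀
  set s : ℕ := t - b₀ with hsdef
  let p₀ : Fin (n - k + 1) := ⟨b₀, hb₀T⟩
  -- the local and global bit-flip unitaries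
  have hmem : Xg k s hs ∈ Matrix.unitaryGroup (Fin (2 ^ k)) ℂ :=
    Matrix.mem_unitaryGroup_iff.mpr
      (by rw [Matrix.star_eq_conjTranspose, Xg_conjTranspose, Xg_mul_Xg])
  let Pu : MPS.UG (2 ^ k) := ⟨Xg k s hs, hmem⟩
  let φ : (Fin (n - k + 1) → MPS.UG (2 ^ k)) → (Fin (n - k + 1) → MPS.UG (2 ^ k)) :=
    fun U p => if p = p₀ then Pu * U p else U p
  -- φ is measure preserving
  haveI hinv : (MPS.haarUG (2 ^ k)).IsMulLeftInvariant := by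
    unfold MPS.haarUG; infer_instance
  have hφmp : MeasurePreserving φ (MPS.haarTuple (n - k + 1) (2 ^ k))
      (MPS.haarTuple (n - k + 1) (2 ^ k)) := by
    unfold MPS.haarTuple
    refine measurePreserving_pi (fun _ => MPS.haarUG (2 ^ k)) (fun _ => MPS.haarUG (2 ^ k))
      (f := fun p u => if p = p₀ then Pu * u else u) (fun p => ?_)
    by_cases hp : p = p₀
    · simp only [hp, if_pos rfl]
      exact measurePreserving_mul_left _ _
    · simp only [if_neg hp]
      exact MeasurePreserving.id _
  -- the circuit transforms by a left bit-flip
  have hXc : ∀ U : Fin (n - k + 1) → MPS.UG (2 ^ k),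
      MPS.circuitOf n k (φ U) = Xg n t htn * MPS.circuitOf n k U := by
    intro U
    unfold MPS.circuitOf MPS.mpsCircuit
    have hfun : (fun p : Fin (n - k + 1) =>
          MPS.embed n k p.1 ((φ U p : Matrix (Fin (2 ^ k)) (Fin (2 ^ k)) ℂ)))
        = Function.update (fun p : Fin (n - k + 1) => MPS.embed n k p.1 (U p)) p₀
            (Xg n t htn * MPS.embed n k p₀.1 (U p₀)) := by
      funext p
      by_cases hp : p = p₀
      · subst hp
        rw [Function.update_self]
        show MPS.embed n k p₀.1
            (((if p₀ = p₀ then Pu * U p₀ else U p₀ : MPS.UG (2 ^ k))) : Matrix _ _ ℂ) = _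
        rw [if_pos rfl, Submonoid.coe_mul]
        exact embed_flip_mul hs hst htn _
      · rw [Function.update_of_ne hp]
        show MPS.embed n k p.1
            (((if p = p₀ then Pu * U p else U p : MPS.UG (2 ^ k))) : Matrix _ _ ℂ) = _
        rw [if_neg hp]
    rw [hfun]
    refine prod_update_left _ p₀ (Xg n t htn) (fun p hp => ?_)
    have hpb : (p : ℕ) < b₀ := hp
    exact embed_comm_Xg (by omega) htn _
  -- conjugation identities
  have hXX := Xg_mul_Xg htn
  have hXH := Xg_conjTranspose htn
  have hanti : Xg n t htn * MPS.pauliZ n i * Xg n t htn = -(MPS.pauliZ n i) := by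
    have h1 := pauliZ_Xg_anticomm htn i ht.symm
    rw [mul_assoc, h1, mul_neg, ← mul_assoc, hXX, one_mul]
  have hcomm : Xg n t htn * MPS.pauliZ n j * Xg n t htn = MPS.pauliZ n j := by
    have h2 := pauliZ_Xg_comm htn j (by omega)
    rw [mul_assoc, h2, ← mul_assoc, hXX, one_mul]
  -- pointwise sign flip of the integrand
  have hpt : ∀ U : Fin (n - k + 1) → MPS.UG (2 ^ k),
      (Matrix.trace (MPS.pauliZ n i * MPS.circuitOf n k (φ U) * σ *
          (MPS.circuitOf n k (φ U))ᴴ)).re *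
        (Matrix.trace (MPS.pauliZ n j * MPS.circuitOf n k (φ U) * σ *
          (MPS.circuitOf n k (φ U))ᴴ)).re
      = -((Matrix.trace (MPS.pauliZ n i * MPS.circuitOf n k U * σ *
            (MPS.circuitOf n k U)ᴴ)).re *
          (Matrix.trace (MPS.pauliZ n j * MPS.circuitOf n k U * σ *
            (MPS.circuitOf n k U)ᴴ)).re) := by
    intro U
    rw [hXc U, trace_conj_neg _ _ _ _ hanti hXH, trace_conj_pos _ _ _ _ hcomm hXH]
    simp only [Complex.neg_re]
    ring
  -- continuity of the integrand
  have hC := continuous_circuitOf n k (n - k + 1)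
  have hcont : Continuous (fun U : Fin (n - k + 1) → MPS.UG (2 ^ k) =>
      (Matrix.trace (MPS.pauliZ n i * MPS.circuitOf n k U * σ * (MPS.circuitOf n k U)ᴴ)).re *
      (Matrix.trace (MPS.pauliZ n j * MPS.circuitOf n k U * σ * (MPS.circuitOf n k U)ᴴ)).re) := by
    apply Continuous.mul <;>
      exact Complex.continuous_re.comp
        ((((continuous_const.matrix_mul hC).matrix_mul continuous_const).matrix_mul
            hC.matrix_conjTranspose).matrix_trace)
  -- conclude
  haveI hsc : SecondCountableTopology (Matrix (Fin (2 ^ k)) (Fin (2 ^ k)) ℂ) :=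
    inferInstanceAs (SecondCountableTopology (Fin (2 ^ k) → Fin (2 ^ k) → ℂ))
  haveI : SecondCountableTopology (MPS.UG (2 ^ k)) :=
    TopologicalSpace.Subtype.secondCountableTopology _
  haveI : OpensMeasurableSpace (Fin (n - k + 1) → MPS.UG (2 ^ k)) := Pi.opensMeasurableSpace
  have main : ∀ F : (Fin (n - k + 1) → MPS.UG (2 ^ k)) → ℝ, Continuous F →
      (∀ U, F (φ U) = -F U) →
      ∫ U, F U ∂ MPS.haarTuple (n - k + 1) (2 ^ k) = 0 := by
    intro F hFc hFφ
    have h0 : ∫ U, F U ∂ MPS.haarTuple (n - k + 1) (2 ^ k)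
        = ∫ U, F (φ U) ∂ MPS.haarTuple (n - k + 1) (2 ^ k) := by
      conv_lhs => rw [← hφmp.map_eq]
      exact integral_map hφmp.measurable.aemeasurable hFc.aestronglyMeasurable
    have h1 : ∫ U, F (φ U) ∂ MPS.haarTuple (n - k + 1) (2 ^ k)
        = -∫ U, F U ∂ MPS.haarTuple (n - k + 1) (2 ^ k) := by
      simp only [hFφ]
      exact integral_neg F
    linarith
  exact main _ hcont hpt
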